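/- Let (X,d) be a metric space and K a nonempty subset of X. Let A, B, S, T be selfmaps of K. Suppose there exist r ∈ [0,1) and a function ψ satisfying Condition-A such that for all x, y ∈ K: ψ(d(Sx,Ty), d(Sx,Ty)) ≤ r · max{ψ(d(Ax,By), d(Ax,Sx)), ψ(d(Ax,By), d(By,Ty)), ψ(d(Ax,Sx), d(By,Ty)), ψ(d(By,Ty), d(Ax,Sx)), min{ψ(d(By,Sx), d(Ax,Sx)), ψ(d(Ax,Ty), d(By,Ty))}, min{ψ(d(By,Sx), d(By,Ty)), ψ(d(Ax,Ty), d(Ax,Sx))}}. Assume the pairs (A,S) and (B,T) are weakly compatible, T(K) is contained in A(K), and the closure of S(K) is contained in B(K). If at least one of the sets T(K), closure of S(K), A(K), or B(K) is complete, then A, B, S and T have a unique common fixed point. -/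

import Mathlib

open Set Filter
open scoped NNReal Topology

/-- A two-variable auxiliary function satisfying Condition-A. -/
def ConditionA (ψ : ℝ≥0 → ℝ≥0 → ℝ≥0) : Prop :=
  Continuous (Function.uncurry ψ) ∧
  (∀ t, Monotone fun s => ψ s t) ∧
  (∀ s, Monotone fun t => ψ s t) ∧
  ψ 0 0 = 0 ∧
  ∀ t, ψ t 0 = 0 → t = 0

theorem stmt_1 {X : Type*} [MetricSpace X] (K : Set X) (hK : K.Nonempty)
    (A B S T : X → X)
    (hA : MapsTo A K K) (hB : MapsTo B K K) (hS : MapsTo S K K) (hT : MapsTo T K K)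
    (r : ℝ≥0) (hr : r < 1)
    (ψ : ℝ≥0 → ℝ≥0 → ℝ≥0) (hψ : ConditionA ψ)
    (hcontr : ∀ x ∈ K, ∀ y ∈ K,
      ψ (nndist (S x) (T y)) (nndist (S x) (T y)) ≤
        r * max (ψ (nndist (A x) (B y)) (nndist (A x) (S x)))
          (max (ψ (nndist (A x) (B y)) (nndist (B y) (T y)))
          (max (ψ (nndist (A x) (S x)) (nndist (B y) (T y)))
          (max (ψ (nndist (B y) (T y)) (nndist (A x) (S x)))
          (max (min (ψ (nndist (B y) (S x)) (nndist (A x) (S x)))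
                    (ψ (nndist (A x) (T y)) (nndist (B y) (T y))))
               (min (ψ (nndist (B y) (S x)) (nndist (B y) (T y)))
                    (ψ (nndist (A x) (T y)) (nndist (A x) (S x)))))))))
    (hAS : ∀ x ∈ K, A x = S x → A (S x) = S (A x))
    (hBT : ∀ x ∈ K, B x = T x → B (T x) = T (B x))
    (hTA : T '' K ⊆ A '' K)
    (hSB : closure (S '' K) ⊆ B '' K)
    (hcomp : IsComplete (T '' K) ∨ IsComplete (closure (S '' K)) ∨
             IsComplete (A '' K) ∨ IsComplete (B '' K)) :
    ∃! z, z ∈ K ∧ A z = z ∧ B z = z ∧ S z = z ∧ T z = z := by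
  classical
  obtain ⟨hψc, hψm1, hψm2, hψ00, hψ0⟩ := hψ
  have ψmono : ∀ {a b c e : ℝ≥0}, a ≤ c → b ≤ e → ψ a b ≤ ψ c e := by
    intro a b c e h1 h2
    exact (hψm1 b h1).trans (hψm2 c h2)
  have hφ0 : ∀ t : ℝ≥0, ψ t t = 0 → t = 0 := by
    intro t h
    refine hψ0 t (le_antisymm ?_ (zero_le))
    calc ψ t 0 ≤ ψ t t := ψmono le_rfl zero_le
    _ = 0 := h
  have hkey : ∀ t : ℝ≥0, ψ t t ≤ r * ψ t t → t = 0 := by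
    intro t h
    rcases eq_or_ne (ψ t t) 0 with h0 | h0
    · exact hφ0 t h0
    · exact absurd h (not_le.2 (mul_lt_of_lt_one_left (pos_iff_ne_zero.2 h0) hr))
  have hmax6 : ∀ {a b c e f g h : ℝ≥0}, a ≤ h → b ≤ h → c ≤ h → e ≤ h → f ≤ h → g ≤ h →
      max a (max b (max c (max e (max f g)))) ≤ h := by
    intro a b c e f g h h1 h2 h3 h4 h5 h6
    simp only [max_le_iff]
    exact ⟨h1, h2, h3, h4, h5, h6⟩
  -- sequence construction
  have hB' : ∀ p ∈ K, ∃ q, q ∈ K ∧ B q = S p := by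
    intro p hp
    obtain ⟨q, hq, he⟩ := hSB (subset_closure ⟨p, hp, rfl⟩)
    exact ⟨q, hq, he⟩
  have hA' : ∀ p ∈ K, ∃ q, q ∈ K ∧ A q = T p := by
    intro p hp
    obtain ⟨q, hq, he⟩ := hTA ⟨p, hp, rfl⟩
    exact ⟨q, hq, he⟩
  choose bn hbn hbe using hB'
  choose an han hae using hA'
  obtain ⟨x0, hx0⟩ := hK
  let x : ℕ → {p : X // p ∈ K} := fun n =>
    Nat.rec ⟨x0, hx0⟩ (fun n p => if Even n then ⟨bn p.1 p.2, hbn p.1 p.2⟩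
      else ⟨an p.1 p.2, han p.1 p.2⟩) n
  have hxE : ∀ n, Even n → B (x (n+1)).1 = S (x n).1 := by
    intro n hn
    have : x (n+1) = if Even n then (⟨bn (x n).1 (x n).2, hbn _ _⟩ : {p // p ∈ K})
        else ⟨an (x n).1 (x n).2, han _ _⟩ := rfl
    rw [this, if_pos hn]
    exact hbe _ _
  have hxO : ∀ n, ¬ Even n → A (x (n+1)).1 = T (x n).1 := by
    intro n hn
    have : x (n+1) = if Even n then (⟨bn (x n).1 (x n).2, hbn _ _⟩ : {p // p ∈ K})
        else ⟨an (x n).1 (x n).2, han _ _⟩ := rfl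
    rw [this, if_neg hn]
    exact hae _ _
  let y : ℕ → X := fun n => if Even n then S (x n).1 else T (x n).1
  have hySe : ∀ n, Even n → S (x n).1 = y n := by
    intro n hn; simp only [y, if_pos hn]
  have hyTo : ∀ n, ¬ Even n → T (x n).1 = y n := by
    intro n hn; simp only [y, if_neg hn]
  have hyB : ∀ n, Even n → B (x (n+1)).1 = y n := fun n hn => (hxE n hn).trans (hySe n hn)
  have hyA : ∀ n, ¬ Even n → A (x (n+1)).1 = y n := fun n hn => (hxO n hn).trans (hyTo n hn)
  -- specialized index forms
  have hSy : ∀ k : ℕ, S (x (2*k+2)).1 = y (2*k+2) := fun k => hySe (2*k+2) (by simp [parity_simps])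
  have hTy : ∀ k : ℕ, T (x (2*k+1)).1 = y (2*k+1) := fun k => hyTo (2*k+1) (by simp [parity_simps])
  have hTy3 : ∀ k : ℕ, T (x (2*k+3)).1 = y (2*k+3) := fun k => hyTo (2*k+3) (by simp [parity_simps])
  have hAy : ∀ k : ℕ, A (x (2*k+2)).1 = y (2*k+1) := fun k => hyA (2*k+1) (by simp [parity_simps])
  have hBy : ∀ k : ℕ, B (x (2*k+1)).1 = y (2*k) := fun k => hyB (2*k) (by simp [parity_simps])
  have hBy2 : ∀ k : ℕ, B (x (2*k+3)).1 = y (2*k+2) := fun k => hyB (2*k+2) (by simp [parity_simps])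
  -- the one-step contraction estimate
  have main : ∀ n, ψ (nndist (y (n+1)) (y (n+2))) (nndist (y (n+1)) (y (n+2))) ≤
      r * ψ (max (nndist (y n) (y (n+1))) (nndist (y (n+1)) (y (n+2))))
            (max (nndist (y n) (y (n+1))) (nndist (y (n+1)) (y (n+2)))) := by
    intro n
    rcases Nat.even_or_odd' n with ⟨k, rfl | rfl⟩
    · have inst := hcontr (x (2*k+2)).1 (x (2*k+2)).2 (x (2*k+1)).1 (x (2*k+1)).2
      rw [hSy k, hTy k, hAy k, hBy k, nndist_comm (y (2*k+2)) (y (2*k+1))] at inst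
      refine inst.trans (mul_le_mul_right (hmax6 ?_ ?_ ?_ ?_ ?_ ?_) r)
      · exact ψmono (by rw [nndist_comm]; exact le_max_left _ _) (le_max_right _ _)
      · exact ψmono (by rw [nndist_comm]; exact le_max_left _ _) (le_max_left _ _)
      · exact ψmono (le_max_right _ _) (le_max_left _ _)
      · exact ψmono (le_max_left _ _) (le_max_right _ _)
      · exact (min_le_right _ _).trans (ψmono (by simp) (le_max_left _ _))
      · exact (min_le_right _ _).trans (ψmono (by simp) (le_max_right _ _))
    · simp only [show 2*k+1+1 = 2*k+2 from rfl, show 2*k+1+2 = 2*k+3 from rfl]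
      have inst := hcontr (x (2*k+2)).1 (x (2*k+2)).2 (x (2*k+3)).1 (x (2*k+3)).2
      rw [hSy k, hTy3 k, hAy k, hBy2 k] at inst
      refine inst.trans (mul_le_mul_right (hmax6 ?_ ?_ ?_ ?_ ?_ ?_) r)
      · exact ψmono (le_max_left _ _) (le_max_left _ _)
      · exact ψmono (le_max_left _ _) (le_max_right _ _)
      · exact ψmono (le_max_left _ _) (le_max_right _ _)
      · exact ψmono (le_max_right _ _) (le_max_left _ _)
      · exact (min_le_left _ _).trans (ψmono (by simp) (le_max_left _ _))
      · exact (min_le_left _ _).trans (ψmono (by simp) (le_max_right _ _))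
  have step : ∀ n, nndist (y (n+1)) (y (n+2)) ≤ nndist (y n) (y (n+1)) ∧
      ψ (nndist (y (n+1)) (y (n+2))) (nndist (y (n+1)) (y (n+2))) ≤
        r * ψ (nndist (y n) (y (n+1))) (nndist (y n) (y (n+1))) := by
    intro n
    have h2 : nndist (y (n+1)) (y (n+2)) ≤ nndist (y n) (y (n+1)) := by
      by_contra hlt
      push_neg at hlt
      have hm := main n
      rw [max_eq_right hlt.le] at hm
      have h0 := hkey _ hm
      rw [h0] at hlt
      exact absurd hlt (not_lt.2 (zero_le))
    refine ⟨h2, ?_⟩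
    have hm := main n
    rwa [max_eq_left h2] at hm
  let d : ℕ → ℝ≥0 := fun n => nndist (y n) (y (n+1))
  have hdanti : Antitone d := antitone_nat_of_succ_le fun n => (step n).1
  have hgeo : ∀ n, ψ (d n) (d n) ≤ r ^ n * ψ (d 0) (d 0) := by
    intro n
    induction n with
    | zero => simp
    | succ n ih =>
        calc ψ (d (n+1)) (d (n+1)) ≤ r * ψ (d n) (d n) := (step n).2
        _ ≤ r * (r ^ n * ψ (d 0) (d 0)) := mul_le_mul_right ih r
        _ = r ^ (n+1) * ψ (d 0) (d 0) := by ring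
  have hrpow : Tendsto (fun n => r ^ n * ψ (d 0) (d 0)) atTop (𝓝 0) := by
    have := (NNReal.tendsto_pow_atTop_nhds_zero_of_lt_one hr).mul_const (ψ (d 0) (d 0))
    simpa using this
  have hinf : (⨅ n, d n) = 0 := by
    apply hφ0
    apply le_antisymm _ (zero_le)
    refine ge_of_tendsto hrpow (Eventually.of_forall fun n => ?_)
    exact (ψmono (ciInf_le (OrderBot.bddBelow _) n) (ciInf_le (OrderBot.bddBelow _) n)).trans (hgeo n)
  have hd0 : Tendsto d atTop (𝓝 0) := hinf ▸ tendsto_atTop_ciInf hdanti (OrderBot.bddBelow _)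
  -- tendsto helper for ψ
  have tψ : ∀ {f g : ℕ → ℝ≥0} {a b : ℝ≥0}, Tendsto f atTop (𝓝 a) → Tendsto g atTop (𝓝 b) →
      Tendsto (fun i => ψ (f i) (g i)) atTop (𝓝 (ψ a b)) := by
    intro f g a b hf hg
    exact (hψc.tendsto (a, b)).comp (hf.prodMk_nhds hg)
  -- mixed pair estimate
  have MIX : ∀ k m : ℕ,
      ψ (nndist (y (2*k+2)) (y (2*m+1))) (nndist (y (2*k+2)) (y (2*m+1))) ≤
      r * ψ (nndist (y (2*k+2)) (y (2*m+1)) + nndist (y (2*k+1)) (y (2*k+2))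
              + nndist (y (2*m)) (y (2*m+1)))
            (max (nndist (y (2*k+1)) (y (2*k+2))) (nndist (y (2*m)) (y (2*m+1)))) := by
    intro k m
    have inst := hcontr (x (2*k+2)).1 (x (2*k+2)).2 (x (2*m+1)).1 (x (2*m+1)).2
    rw [hSy k, hTy m, hAy k, hBy m] at inst
    have hfirst : nndist (y (2*k+1)) (y (2*m)) ≤ nndist (y (2*k+2)) (y (2*m+1))
        + nndist (y (2*k+1)) (y (2*k+2)) + nndist (y (2*m)) (y (2*m+1)) := by
      calc nndist (y (2*k+1)) (y (2*m))
          ≤ nndist (y (2*k+1)) (y (2*k+2)) + nndist (y (2*k+2)) (y (2*m)) :=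
            nndist_triangle _ _ _
        _ ≤ nndist (y (2*k+1)) (y (2*k+2)) + (nndist (y (2*k+2)) (y (2*m+1))
              + nndist (y (2*m+1)) (y (2*m))) :=
            add_le_add_right (nndist_triangle _ _ _) _
        _ = nndist (y (2*k+2)) (y (2*m+1)) + nndist (y (2*k+1)) (y (2*k+2))
              + nndist (y (2*m)) (y (2*m+1)) := by
            rw [nndist_comm (y (2*m+1)) (y (2*m))]; ring
    have hBS : nndist (y (2*m)) (y (2*k+2)) ≤ nndist (y (2*k+2)) (y (2*m+1))
        + nndist (y (2*k+1)) (y (2*k+2)) + nndist (y (2*m)) (y (2*m+1)) := by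
      calc nndist (y (2*m)) (y (2*k+2))
          ≤ nndist (y (2*m)) (y (2*m+1)) + nndist (y (2*m+1)) (y (2*k+2)) :=
            nndist_triangle _ _ _
        _ = nndist (y (2*k+2)) (y (2*m+1)) + nndist (y (2*m)) (y (2*m+1)) := by
            rw [nndist_comm (y (2*m+1)) (y (2*k+2))]; ring
        _ ≤ _ := add_le_add le_self_add le_rfl
    refine inst.trans (mul_le_mul_right (hmax6 ?_ ?_ ?_ ?_ ?_ ?_) r)
    · exact ψmono hfirst (le_max_left _ _)
    · exact ψmono hfirst (le_max_right _ _)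
    · exact ψmono (le_add_right le_add_self) (le_max_right _ _)
    · exact ψmono le_add_self (le_max_left _ _)
    · exact (min_le_left _ _).trans (ψmono hBS (le_max_left _ _))
    · exact (min_le_left _ _).trans (ψmono hBS (le_max_right _ _))
  have hcauchy : CauchySeq y := by
    rw [Metric.cauchySeq_iff]
    by_contra hcc
    push_neg at hcc
    obtain ⟨ε, hε, hcc⟩ := hcc
    set ε' : ℝ≥0 := ε.toNNReal with hε'def
    have hε' : 0 < ε' := Real.toNNReal_pos.2 hε
    have stepA : ∀ N, ∃ p q, N ≤ p ∧ p < q ∧ ε' ≤ nndist (y p) (y q) := by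
      intro N
      obtain ⟨m, hm, n, hn, hd⟩ := hcc N
      have hd' : ε' ≤ nndist (y m) (y n) := by
        rw [hε'def]
        exact Real.toNNReal_le_iff_le_coe.2 (by rwa [← dist_nndist])
      have hmn : m ≠ n := by
        rintro rfl
        rw [nndist_self] at hd'
        exact absurd (le_antisymm hd' (zero_le)) hε'.ne'
      rcases hmn.lt_or_gt with h | h
      · exact ⟨m, n, hm, h, hd'⟩
      · exact ⟨n, m, hn, h, by rwa [nndist_comm]⟩
    have stepB : ∀ N, d N < ε' → ∃ p q, N ≤ p ∧ p + 1 < q ∧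
        ε' ≤ nndist (y p) (y q) ∧ nndist (y p) (y q) ≤ ε' + d N := by
      intro N hN
      obtain ⟨p, q, hNp, hpq, hge⟩ := stepA N
      have hex : ∃ j, p < j ∧ ε' ≤ nndist (y p) (y j) := ⟨q, hpq, hge⟩
      have hq0p : p < Nat.find hex := (Nat.find_spec hex).1
      have hq0ge : ε' ≤ nndist (y p) (y (Nat.find hex)) := (Nat.find_spec hex).2
      have h1 : p + 1 < Nat.find hex := by
        rcases Nat.lt_or_ge (p+1) (Nat.find hex) with h | h
        · exact h
        · exfalso
          have heq : Nat.find hex = p + 1 := le_antisymm h hq0p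
          rw [heq] at hq0ge
          have hcon : ε' ≤ d N := le_trans hq0ge (hdanti hNp)
          exact absurd hcon (not_le.2 hN)
      have hmin := Nat.find_min hex (show Nat.find hex - 1 < Nat.find hex by omega)
      push_neg at hmin
      have h2 : nndist (y p) (y (Nat.find hex - 1)) < ε' := hmin (by omega)
      have hdq : d (Nat.find hex - 1) = nndist (y (Nat.find hex - 1)) (y (Nat.find hex)) := by
        simp only [d]
        rw [show Nat.find hex - 1 + 1 = Nat.find hex from by omega]
      refine ⟨p, Nat.find hex, hNp, h1, hq0ge, ?_⟩
      calc nndist (y p) (y (Nat.find hex))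
          ≤ nndist (y p) (y (Nat.find hex - 1)) + nndist (y (Nat.find hex - 1)) (y (Nat.find hex)) :=
            nndist_triangle _ _ _
        _ = nndist (y p) (y (Nat.find hex - 1)) + d (Nat.find hex - 1) := by rw [hdq]
        _ ≤ ε' + d N := add_le_add h2.le (hdanti (by omega))
    have mixed : ∀ N, d (N+1) < ε' → ∃ k m : ℕ, N ≤ 2*k+1 ∧ N ≤ 2*m ∧
        ε' ≤ nndist (y (2*k+2)) (y (2*m+1)) + d N ∧
        nndist (y (2*k+2)) (y (2*m+1)) ≤ ε' + 2 * d N := by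
      intro N hlt
      obtain ⟨p, q, hNp, hpq, hge, hle⟩ := stepB (N+1) hlt
      have hdN1 : d (N+1) ≤ d N := hdanti (Nat.le_succ N)
      have h2d : d (N+1) ≤ 2 * d N := hdN1.trans (by rw [two_mul]; exact le_add_self)
      rcases Nat.even_or_odd' p with ⟨a, rfl | rfl⟩ <;> rcases Nat.even_or_odd' q with ⟨b, rfl | rfl⟩
      · -- p = 2a, q = 2b
        obtain ⟨k, rfl⟩ : ∃ k, a = k+1 := ⟨a-1, by omega⟩
        have hq : (2*b : ℕ) = 2*(b-1)+2 := by omega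
        refine ⟨k, b, by omega, by omega, ?_, ?_⟩
        · have htr : nndist (y (2*(k+1))) (y (2*b)) ≤
              nndist (y (2*(k+1))) (y (2*b+1)) + d (2*b) := by
            calc nndist (y (2*(k+1))) (y (2*b))
                ≤ nndist (y (2*(k+1))) (y (2*b+1)) + nndist (y (2*b+1)) (y (2*b)) :=
                  nndist_triangle _ _ _
              _ = nndist (y (2*(k+1))) (y (2*b+1)) + d (2*b) := by
                  rw [nndist_comm (y (2*b+1)) (y (2*b))]
          have hdb : d (2*b) ≤ d N := hdanti (by omega)
          calc ε' ≤ nndist (y (2*(k+1))) (y (2*b)) := hge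
            _ ≤ nndist (y (2*(k+1))) (y (2*b+1)) + d (2*b) := htr
            _ ≤ nndist (y (2*k+2)) (y (2*b+1)) + d N := by
                rw [show 2*(k+1) = 2*k+2 from by ring]; exact add_le_add le_rfl hdb
        · have htr : nndist (y (2*(k+1))) (y (2*b+1)) ≤
              nndist (y (2*(k+1))) (y (2*b)) + d (2*b) :=
            nndist_triangle _ _ _
          have hdb : d (2*b) ≤ d N := hdanti (by omega)
          calc nndist (y (2*k+2)) (y (2*b+1))
              = nndist (y (2*(k+1))) (y (2*b+1)) := by rw [show 2*(k+1) = 2*k+2 from by ring]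
            _ ≤ nndist (y (2*(k+1))) (y (2*b)) + d (2*b) := htr
            _ ≤ (ε' + d (N+1)) + d N := add_le_add hle hdb
            _ ≤ ε' + 2 * d N := by
                rw [two_mul, ← add_assoc]; exact add_le_add (add_le_add le_rfl hdN1) le_rfl
      · -- p = 2a, q = 2b+1
        obtain ⟨k, rfl⟩ : ∃ k, a = k+1 := ⟨a-1, by omega⟩
        refine ⟨k, b, by omega, by omega, ?_, ?_⟩
        · rw [show 2*k+2 = 2*(k+1) from by ring]
          exact le_add_right hge
        · rw [show 2*k+2 = 2*(k+1) from by ring]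
          exact hle.trans (add_le_add le_rfl h2d)
      · -- p = 2a+1, q = 2b
        obtain ⟨k, rfl⟩ : ∃ k, b = k+1 := ⟨b-1, by omega⟩
        refine ⟨k, a, by omega, by omega, ?_, ?_⟩
        · rw [show 2*k+2 = 2*(k+1) from by ring, nndist_comm]
          exact hge.trans (le_add_right le_rfl)
        · rw [show 2*k+2 = 2*(k+1) from by ring, nndist_comm]
          exact hle.trans (add_le_add le_rfl h2d)
      · -- p = 2a+1, q = 2b+1
        refine ⟨a, b, by omega, by omega, ?_, ?_⟩
        · have htr : nndist (y (2*a+1)) (y (2*b+1)) ≤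
              d (2*a+1) + nndist (y (2*a+2)) (y (2*b+1)) := nndist_triangle _ _ _
          have hda : d (2*a+1) ≤ d N := hdanti (by omega)
          calc ε' ≤ nndist (y (2*a+1)) (y (2*b+1)) := hge
            _ ≤ d (2*a+1) + nndist (y (2*a+2)) (y (2*b+1)) := htr
            _ ≤ nndist (y (2*a+2)) (y (2*b+1)) + d N := by
                rw [add_comm]; exact add_le_add le_rfl hda
        · have htr : nndist (y (2*a+2)) (y (2*b+1)) ≤
              nndist (y (2*a+2)) (y (2*a+1)) + nndist (y (2*a+1)) (y (2*b+1)) :=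
            nndist_triangle _ _ _
          have hda : d (2*a+1) ≤ d N := hdanti (by omega)
          calc nndist (y (2*a+2)) (y (2*b+1))
              ≤ nndist (y (2*a+2)) (y (2*a+1)) + nndist (y (2*a+1)) (y (2*b+1)) := htr
            _ = d (2*a+1) + nndist (y (2*a+1)) (y (2*b+1)) := by
                rw [nndist_comm (y (2*a+2)) (y (2*a+1))]
            _ ≤ d N + (ε' + d (N+1)) := add_le_add hda hle
            _ ≤ ε' + 2 * d N := by
                rw [two_mul]
                calc d N + (ε' + d (N+1)) ≤ d N + (ε' + d N) := add_le_add le_rfl (add_le_add le_rfl hdN1)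
                  _ = ε' + (d N + d N) := by ring
    -- pass to the limit
    have hev : ∀ᶠ N in atTop, ψ (ε' - d N) (ε' - d N) ≤ r * ψ (ε' + 4 * d N) (d N) := by
      have hsmall : ∀ᶠ N in atTop, d (N+1) < ε' :=
        (hd0.comp (tendsto_add_atTop_nat 1)).eventually (gt_mem_nhds hε')
      filter_upwards [hsmall] with N hN
      obtain ⟨k, m, hk, hm, h1, h2⟩ := mixed N hN
      have hdk : nndist (y (2*k+1)) (y (2*k+2)) ≤ d N := hdanti hk
      have hdm : nndist (y (2*m)) (y (2*m+1)) ≤ d N := hdanti hm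
      calc ψ (ε' - d N) (ε' - d N)
          ≤ ψ (nndist (y (2*k+2)) (y (2*m+1))) (nndist (y (2*k+2)) (y (2*m+1))) :=
            ψmono (tsub_le_iff_right.2 h1) (tsub_le_iff_right.2 h1)
        _ ≤ r * ψ (nndist (y (2*k+2)) (y (2*m+1)) + nndist (y (2*k+1)) (y (2*k+2))
              + nndist (y (2*m)) (y (2*m+1)))
            (max (nndist (y (2*k+1)) (y (2*k+2))) (nndist (y (2*m)) (y (2*m+1)))) := MIX k m
        _ ≤ r * ψ (ε' + 4 * d N) (d N) := by
            refine mul_le_mul_right (ψmono ?_ (max_le hdk hdm)) r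
            calc nndist (y (2*k+2)) (y (2*m+1)) + nndist (y (2*k+1)) (y (2*k+2))
                  + nndist (y (2*m)) (y (2*m+1))
                ≤ (ε' + 2 * d N) + d N + d N := add_le_add (add_le_add h2 hdk) hdm
              _ = ε' + 4 * d N := by ring
    have hlhs : Tendsto (fun N => ψ (ε' - d N) (ε' - d N)) atTop (𝓝 (ψ ε' ε')) := by
      have h1 : Tendsto (fun N => ε' - d N) atTop (𝓝 ε') := by
        have := tendsto_const_nhds.sub hd0 (f := fun _ : ℕ => ε')
        simpa using this
      exact tψ h1 h1
    have hrhs : Tendsto (fun N => r * ψ (ε' + 4 * d N) (d N)) atTop (𝓝 (r * ψ ε' 0)) := by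
      have h2 : Tendsto (fun N => ε' + 4 * d N) atTop (𝓝 ε') := by
        have := tendsto_const_nhds.add (hd0.const_mul 4) (f := fun _ : ℕ => ε')
        simpa using this
      exact (tψ h2 hd0).const_mul r
    have hfin : ψ ε' ε' ≤ r * ψ ε' 0 := le_of_tendsto_of_tendsto hlhs hrhs hev
    have : ψ ε' ε' ≤ r * ψ ε' ε' := hfin.trans (mul_le_mul_right (ψmono le_rfl (zero_le)) r)
    exact absurd (hkey _ this) hε'.ne'
  -- membership facts
  have hyTmem : ∀ k : ℕ, y (2*k+1) ∈ T '' K := by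
    intro k; rw [← hTy k]; exact mem_image_of_mem T (x (2*k+1)).2
  have hySmem : ∀ k : ℕ, y (2*k) ∈ S '' K := by
    intro k; rw [← hySe (2*k) (by simp [parity_simps])]; exact mem_image_of_mem S (x (2*k)).2
  have hyAmem : ∀ k : ℕ, y (2*k+1) ∈ A '' K := by
    intro k; rw [← hAy k]; exact mem_image_of_mem A (x (2*k+2)).2
  have hyBmem : ∀ k : ℕ, y (2*k) ∈ B '' K := by
    intro k; rw [← hBy k]; exact mem_image_of_mem B (x (2*k+1)).2
  have hsub0 : Tendsto (fun k : ℕ => 2*k) atTop atTop :=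
    tendsto_atTop_atTop.2 fun b => ⟨b, fun a ha => by omega⟩
  have hsub1 : Tendsto (fun k : ℕ => 2*k+1) atTop atTop :=
    tendsto_atTop_atTop.2 fun b => ⟨b, fun a ha => by omega⟩
  have hsub2 : Tendsto (fun k : ℕ => 2*k+2) atTop atTop :=
    tendsto_atTop_atTop.2 fun b => ⟨b, fun a ha => by omega⟩
  obtain ⟨z, hzt⟩ : ∃ z, Tendsto y atTop (𝓝 z) := by
    rcases hcomp with h|h|h|h
    · obtain ⟨z, _, hz⟩ := cauchySeq_tendsto_of_isComplete h (fun k => hyTmem k)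
        (hcauchy.comp_tendsto hsub1)
      exact ⟨z, tendsto_nhds_of_cauchySeq_of_subseq hcauchy hsub1 hz⟩
    · obtain ⟨z, _, hz⟩ := cauchySeq_tendsto_of_isComplete h
        (fun k => subset_closure (hySmem k)) (hcauchy.comp_tendsto hsub0)
      exact ⟨z, tendsto_nhds_of_cauchySeq_of_subseq hcauchy hsub0 hz⟩
    · obtain ⟨z, _, hz⟩ := cauchySeq_tendsto_of_isComplete h (fun k => hyAmem k)
        (hcauchy.comp_tendsto hsub1)
      exact ⟨z, tendsto_nhds_of_cauchySeq_of_subseq hcauchy hsub1 hz⟩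
    · obtain ⟨z, _, hz⟩ := cauchySeq_tendsto_of_isComplete h (fun k => hyBmem k)
        (hcauchy.comp_tendsto hsub0)
      exact ⟨z, tendsto_nhds_of_cauchySeq_of_subseq hcauchy hsub0 hz⟩
  have hze : Tendsto (fun k => y (2*k)) atTop (𝓝 z) := hzt.comp hsub0
  have hzo : Tendsto (fun k => y (2*k+1)) atTop (𝓝 z) := hzt.comp hsub1
  have hzo2 : Tendsto (fun k => y (2*k+2)) atTop (𝓝 z) := hzt.comp hsub2
  obtain ⟨v, hv, hvB⟩ := hSB (mem_closure_of_tendsto hze (Eventually.of_forall fun k => hySmem k))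
  -- T v = z
  have hTv : T v = z := by
    have hineq : ∀ k : ℕ, ψ (nndist (y (2*k+2)) (T v)) (nndist (y (2*k+2)) (T v)) ≤
        r * max (ψ (nndist (y (2*k+1)) z) (nndist (y (2*k+1)) (y (2*k+2))))
          (max (ψ (nndist (y (2*k+1)) z) (nndist z (T v)))
          (max (ψ (nndist (y (2*k+1)) (y (2*k+2))) (nndist z (T v)))
          (max (ψ (nndist z (T v)) (nndist (y (2*k+1)) (y (2*k+2))))
          (max (min (ψ (nndist z (y (2*k+2)))  (nndist (y (2*k+1)) (y (2*k+2))))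
                    (ψ (nndist (y (2*k+1)) (T v)) (nndist z (T v))))
               (min (ψ (nndist z (y (2*k+2))) (nndist z (T v)))
                    (ψ (nndist (y (2*k+1)) (T v)) (nndist (y (2*k+1)) (y (2*k+2))))))))) := by
      intro k
      have inst := hcontr (x (2*k+2)).1 (x (2*k+2)).2 v hv
      rwa [hSy k, hAy k, hvB] at inst
    have l1 : Tendsto (fun k => nndist (y (2*k+1)) z) atTop (𝓝 (nndist z z)) :=
      hzo.nndist tendsto_const_nhds
    have l2 : Tendsto (fun k => nndist (y (2*k+1)) (y (2*k+2))) atTop (𝓝 (nndist z z)) :=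
      hzo.nndist hzo2
    have l3 : Tendsto (fun _ : ℕ => nndist z (T v)) atTop (𝓝 (nndist z (T v))) :=
      tendsto_const_nhds
    have l4 : Tendsto (fun k => nndist z (y (2*k+2))) atTop (𝓝 (nndist z z)) :=
      tendsto_const_nhds.nndist hzo2
    have l5 : Tendsto (fun k => nndist (y (2*k+1)) (T v)) atTop (𝓝 (nndist z (T v))) :=
      hzo.nndist tendsto_const_nhds
    have hL : Tendsto (fun k => ψ (nndist (y (2*k+2)) (T v)) (nndist (y (2*k+2)) (T v)))
        atTop (𝓝 (ψ (nndist z (T v)) (nndist z (T v)))) :=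
      tψ (hzo2.nndist tendsto_const_nhds) (hzo2.nndist tendsto_const_nhds)
    have hR := (((tψ l1 l2).max ((tψ l1 l3).max ((tψ l2 l3).max ((tψ l3 l2).max
      (((tψ l4 l2).min (tψ l5 l3)).max ((tψ l4 l3).min (tψ l5 l2))))))).const_mul r)
    have hlim := le_of_tendsto_of_tendsto hL hR (Eventually.of_forall hineq)
    simp only [nndist_self] at hlim
    have hfin : ψ (nndist z (T v)) (nndist z (T v)) ≤
        r * ψ (nndist z (T v)) (nndist z (T v)) := by
      refine hlim.trans (mul_le_mul_right (hmax6 ?_ ?_ ?_ ?_ ?_ ?_) r)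
      · exact ψmono (zero_le) (zero_le)
      · exact ψmono (zero_le) le_rfl
      · exact ψmono (zero_le) le_rfl
      · exact ψmono le_rfl (zero_le)
      · exact (min_le_left _ _).trans (ψmono (zero_le) (zero_le))
      · exact (min_le_left _ _).trans (ψmono (zero_le) le_rfl)
    exact (nndist_eq_zero.1 (hkey _ hfin)).symm
  -- z ∈ A '' K
  obtain ⟨u, hu, huA⟩ := hTA ⟨v, hv, hTv⟩
  -- S u = z
  have hSu : S u = z := by
    have hineq : ∀ k : ℕ, ψ (nndist (S u) (y (2*k+1))) (nndist (S u) (y (2*k+1))) ≤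
        r * max (ψ (nndist z (y (2*k))) (nndist z (S u)))
          (max (ψ (nndist z (y (2*k))) (nndist (y (2*k)) (y (2*k+1))))
          (max (ψ (nndist z (S u)) (nndist (y (2*k)) (y (2*k+1))))
          (max (ψ (nndist (y (2*k)) (y (2*k+1))) (nndist z (S u)))
          (max (min (ψ (nndist (y (2*k)) (S u)) (nndist z (S u)))
                    (ψ (nndist z (y (2*k+1))) (nndist (y (2*k)) (y (2*k+1)))))
               (min (ψ (nndist (y (2*k)) (S u)) (nndist (y (2*k)) (y (2*k+1))))
                    (ψ (nndist z (y (2*k+1))) (nndist z (S u)))))))) := by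
      intro k
      have inst := hcontr u hu (x (2*k+1)).1 (x (2*k+1)).2
      rwa [hTy k, hBy k, huA] at inst
    have l1 : Tendsto (fun k => nndist z (y (2*k))) atTop (𝓝 (nndist z z)) :=
      tendsto_const_nhds.nndist hze
    have l2 : Tendsto (fun _ : ℕ => nndist z (S u)) atTop (𝓝 (nndist z (S u))) :=
      tendsto_const_nhds
    have l3 : Tendsto (fun k => nndist (y (2*k)) (y (2*k+1))) atTop (𝓝 (nndist z z)) :=
      hze.nndist hzo
    have l4 : Tendsto (fun k => nndist (y (2*k)) (S u)) atTop (𝓝 (nndist z (S u))) :=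
      hze.nndist tendsto_const_nhds
    have l5 : Tendsto (fun k => nndist z (y (2*k+1))) atTop (𝓝 (nndist z z)) :=
      tendsto_const_nhds.nndist hzo
    have hL : Tendsto (fun k => ψ (nndist (S u) (y (2*k+1))) (nndist (S u) (y (2*k+1))))
        atTop (𝓝 (ψ (nndist (S u) z) (nndist (S u) z))) :=
      tψ (tendsto_const_nhds.nndist hzo) (tendsto_const_nhds.nndist hzo)
    have hR := (((tψ l1 l2).max ((tψ l1 l3).max ((tψ l2 l3).max ((tψ l3 l2).max
      (((tψ l4 l2).min (tψ l5 l3)).max ((tψ l4 l3).min (tψ l5 l2))))))).const_mul r)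
    have hlim := le_of_tendsto_of_tendsto hL hR (Eventually.of_forall hineq)
    simp only [nndist_self] at hlim
    rw [nndist_comm z (S u)] at hlim
    have hfin : ψ (nndist (S u) z) (nndist (S u) z) ≤
        r * ψ (nndist (S u) z) (nndist (S u) z) := by
      refine hlim.trans (mul_le_mul_right (hmax6 ?_ ?_ ?_ ?_ ?_ ?_) r)
      · exact ψmono (zero_le) le_rfl
      · exact ψmono (zero_le) (zero_le)
      · exact ψmono le_rfl (zero_le)
      · exact ψmono (zero_le) le_rfl
      · exact (min_le_right _ _).trans (ψmono (zero_le) (zero_le))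
      · exact (min_le_right _ _).trans (ψmono (zero_le) le_rfl)
    exact nndist_eq_zero.1 (hkey _ hfin)
  have hzK : z ∈ K := by rw [← hTv]; exact hT hv
  have hAzSz : A z = S z := by
    have h := hAS u hu (huA.trans hSu.symm)
    rwa [hSu, huA] at h
  have hBzTz : B z = T z := by
    have h := hBT v hv (hvB.trans hTv.symm)
    rwa [hTv, hvB] at h
  have hSz : S z = z := by
    have inst := hcontr z hzK v hv
    rw [hvB, hTv, hAzSz] at inst
    simp only [nndist_self] at inst
    have hfin : ψ (nndist (S z) z) (nndist (S z) z) ≤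
        r * ψ (nndist (S z) z) (nndist (S z) z) := by
      refine inst.trans (mul_le_mul_right (hmax6 ?_ ?_ ?_ ?_ ?_ ?_) r)
      · exact ψmono le_rfl (zero_le)
      · exact ψmono le_rfl (zero_le)
      · exact ψmono (zero_le) (zero_le)
      · exact ψmono (zero_le) (zero_le)
      · exact (min_le_right _ _).trans (ψmono le_rfl (zero_le))
      · exact (min_le_right _ _).trans (ψmono le_rfl (zero_le))
    exact nndist_eq_zero.1 (hkey _ hfin)
  have hAz : A z = z := hAzSz.trans hSz
  have hTz : T z = z := by
    have inst := hcontr u hu z hzK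
    rw [hSu, huA, hBzTz] at inst
    simp only [nndist_self] at inst
    have hfin : ψ (nndist z (T z)) (nndist z (T z)) ≤
        r * ψ (nndist z (T z)) (nndist z (T z)) := by
      refine inst.trans (mul_le_mul_right (hmax6 ?_ ?_ ?_ ?_ ?_ ?_) r)
      · exact ψmono le_rfl (zero_le)
      · exact ψmono le_rfl (zero_le)
      · exact ψmono (zero_le) (zero_le)
      · exact ψmono (zero_le) (zero_le)
      · exact (min_le_right _ _).trans (ψmono le_rfl (zero_le))
      · exact (min_le_right _ _).trans (ψmono le_rfl (zero_le))
    exact (nndist_eq_zero.1 (hkey _ hfin)).symm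
  have hBz : B z = z := hBzTz.trans hTz
  refine ⟨z, ⟨hzK, hAz, hBz, hSz, hTz⟩, ?_⟩
  rintro w ⟨hwK, hwA, hwB, hwS, hwT⟩
  have inst := hcontr z hzK w hwK
  rw [hSz, hwT, hAz, hwB] at inst
  simp only [nndist_self] at inst
  have hfin : ψ (nndist z w) (nndist z w) ≤ r * ψ (nndist z w) (nndist z w) := by
    refine inst.trans (mul_le_mul_right (hmax6 ?_ ?_ ?_ ?_ ?_ ?_) r)
    · exact ψmono le_rfl (zero_le)
    · exact ψmono le_rfl (zero_le)
    · exact ψmono (zero_le) (zero_le)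
    · exact ψmono (zero_le) (zero_le)
    · exact (min_le_right _ _).trans (ψmono le_rfl (zero_le))
    · exact (min_le_right _ _).trans (ψmono le_rfl (zero_le))
  exact (nndist_eq_zero.1 (hkey _ hfin)).symm
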